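/- For a signed permutation w ∈ W_n and 1 ≤ k ≤ n-1, w lies in the domain D^k_{SC}(W_n) of the operator T^k_{SC} if and only if |w(1)| > |w(2)| > ... > |w(k+1)|. -/

import Mathlib

/-- The signed transposition `s_j` of type `B`: swaps `j ↔ j+1` and `-j ↔ -(j+1)`. -/
def sgen (j : ℕ) : Equiv.Perm ℤ :=
  Equiv.swap (j : ℤ) ((j : ℤ) + 1) * Equiv.swap (-(j : ℤ)) (-((j : ℤ) + 1))

/-- The sign change `t_j`: swaps `j ↔ -j`, i.e. changes the sign of the `j`-th entry. -/
def tgen (j : ℕ) : Equiv.Perm ℤ := Equiv.swap (j : ℤ) (-(j : ℤ))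

/-- The hyperoctahedral group `W_n`: permutations `w` of `{±1, …, ±n}` with `w(-i) = -w(i)`,
realized as permutations of `ℤ` commuting with negation and fixing `i` with `|i| > n`. -/
def Wgrp (n : ℕ) : Set (Equiv.Perm ℤ) :=
  {w | (∀ i : ℤ, w (-i) = - w i) ∧ ∀ i : ℤ, (n : ℤ) < |i| → w i = i}

/-- Coxeter length on `W_n` with respect to the simple reflections
`s_1, …, s_{n-1}, t_1`: minimal length of a word in these generators. -/
noncomputable def lenB (n : ℕ) (w : Equiv.Perm ℤ) : ℕ :=
  sInf {k | ∃ l : List (Equiv.Perm ℤ), l.length = k ∧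
    (∀ g ∈ l, (∃ j : ℕ, 1 ≤ j ∧ j < n ∧ g = sgen j) ∨ g = tgen 1) ∧ l.prod = w}

/-- `α_{i+1} ∈ τ^k(w)`, i.e. `ℓ(w s_i) < ℓ(w)` where `s_i = s_{α_{i+1}}`. -/
noncomputable def InTauS (n i : ℕ) (w : Equiv.Perm ℤ) : Prop :=
  lenB n (w * sgen i) < lenB n w

/-- `α'_i ∈ τ^k(w)`, i.e. `ℓ(w t_i) < ℓ(w)` where `t_i = s_{α'_i}`. -/
noncomputable def InTauT (n i : ℕ) (w : Equiv.Perm ℤ) : Prop :=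
  lenB n (w * tgen i) < lenB n w

lemma sgen_apply (j : ℕ) (hj : 1 ≤ j) (x : ℤ) :
    sgen j x = if x = j then (j:ℤ)+1 else if x = (j:ℤ)+1 then j else
      if x = -(j:ℤ) then -((j:ℤ)+1) else if x = -((j:ℤ)+1) then -(j:ℤ) else x := by
  have hj' : (1:ℤ) ≤ j := by exact_mod_cast hj
  simp only [sgen, Equiv.Perm.mul_apply, Equiv.swap_apply_def]
  split_ifs <;> omega

lemma tgen_apply (i : ℕ) (x : ℤ) :
    tgen i x = if x = i then -(i:ℤ) else if x = -(i:ℤ) then i else x := by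
  simp only [tgen, Equiv.swap_apply_def]

lemma tgen_sq (i : ℕ) : tgen i * tgen i = 1 := Equiv.swap_mul_self _ _

lemma sgen_sq (j : ℕ) (hj : 1 ≤ j) : sgen j * sgen j = 1 := by
  apply Equiv.ext
  intro x
  have hj' : (1:ℤ) ≤ j := by exact_mod_cast hj
  simp only [Equiv.Perm.mul_apply, sgen_apply j hj, Equiv.Perm.one_apply]
  split_ifs <;> omega

lemma sgen_inv (j : ℕ) (hj : 1 ≤ j) : (sgen j)⁻¹ = sgen j := by
  rw [eq_comm, eq_inv_iff_mul_eq_one, sgen_sq j hj]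

lemma tgen_succ (i : ℕ) (hi : 1 ≤ i) : tgen (i+1) = sgen i * tgen i * sgen i := by
  have hj' : (1:ℤ) ≤ i := by exact_mod_cast hi
  have h1 : sgen i (i:ℤ) = ((i:ℤ)+1) := by rw [sgen_apply i hi]; split_ifs <;> omega
  have h2 : sgen i (-(i:ℤ)) = -((i:ℤ)+1) := by rw [sgen_apply i hi]; split_ifs <;> omega
  have := Equiv.swap_apply_apply (sgen i) (i:ℤ) (-(i:ℤ))
  rw [h1, h2, sgen_inv i hi] at this
  unfold tgen
  push_cast
  rw [this]


lemma one_mem_Wgrp (n : ℕ) : (1 : Equiv.Perm ℤ) ∈ Wgrp n := by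
  constructor <;> intro i <;> simp

lemma mul_mem_Wgrp {n : ℕ} {w v : Equiv.Perm ℤ} (hw : w ∈ Wgrp n) (hv : v ∈ Wgrp n) :
    w * v ∈ Wgrp n := by
  constructor
  · intro i
    simp only [Equiv.Perm.mul_apply, hv.1 i, hw.1 (v i)]
  · intro i hi
    simp only [Equiv.Perm.mul_apply, hv.2 i hi, hw.2 i hi]

lemma sgen_mem_Wgrp {n j : ℕ} (hj : 1 ≤ j) (hjn : j + 1 ≤ n) : sgen j ∈ Wgrp n := by
  have hj' : (1:ℤ) ≤ j := by exact_mod_cast hj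
  have hjn' : (j:ℤ) + 1 ≤ n := by exact_mod_cast hjn
  constructor
  · intro i
    rw [sgen_apply j hj, sgen_apply j hj]
    split_ifs <;> omega
  · intro i hi
    rw [sgen_apply j hj]
    rcases abs_cases i with ⟨h1, h2⟩ | ⟨h1, h2⟩ <;> split_ifs <;> omega

lemma tgen_mem_Wgrp {n i : ℕ} (hi : 1 ≤ i) (hin : i ≤ n) : tgen i ∈ Wgrp n := by
  have hi' : (1:ℤ) ≤ i := by exact_mod_cast hi
  have hin' : (i:ℤ) ≤ n := by exact_mod_cast hin
  constructor
  · intro x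
    rw [tgen_apply, tgen_apply]
    split_ifs <;> omega
  · intro x hx
    rw [tgen_apply]
    rcases abs_cases x with ⟨h1, h2⟩ | ⟨h1, h2⟩ <;> split_ifs <;> omega

lemma Wgrp_zero {n : ℕ} {w : Equiv.Perm ℤ} (hw : w ∈ Wgrp n) : w 0 = 0 := by
  have := hw.1 0
  simp only [neg_zero] at this
  omega

lemma Wgrp_ne_zero {n : ℕ} {w : Equiv.Perm ℤ} (hw : w ∈ Wgrp n) {i : ℤ} (hi : i ≠ 0) :
    w i ≠ 0 := by
  intro h
  exact hi (w.injective (by rw [h, Wgrp_zero hw]))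

lemma Wgrp_ne_neg {n : ℕ} {w : Equiv.Perm ℤ} (hw : w ∈ Wgrp n) {i j : ℤ} (hij : i ≠ -j) :
    w i ≠ -(w j) := by
  intro h
  rw [← hw.1 j] at h
  exact hij (w.injective h)

noncomputable def Pn (n : ℕ) : Finset (ℤ × ℤ) := Finset.Icc 1 (n:ℤ) ×ˢ Finset.Icc 1 (n:ℤ)

def Gstat (w : Equiv.Perm ℤ) (p : ℤ × ℤ) : ℕ :=
  (if p.1 < p.2 ∧ w p.2 < w p.1 then 1 else 0) +
  (if p.1 < p.2 ∧ w p.1 + w p.2 < 0 then 1 else 0)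

noncomputable def Lstat (n : ℕ) (w : Equiv.Perm ℤ) : ℕ :=
  (∑ p ∈ Pn n, Gstat w p) + ∑ i ∈ Finset.Icc (1:ℤ) (n:ℤ), (if w i < 0 then 1 else 0)

lemma sgen_eq_swap (j : ℕ) (hj : 1 ≤ j) {x : ℤ} (hx : 1 ≤ x) :
    sgen j x = Equiv.swap (j:ℤ) ((j:ℤ)+1) x := by
  have hj' : (1:ℤ) ≤ j := by exact_mod_cast hj
  rw [sgen_apply j hj, Equiv.swap_apply_def]
  split_ifs <;> omega

lemma swapj_def (a b x : ℤ) :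
    Equiv.swap a b x = if x = a then b else if x = b then a else x :=
  Equiv.swap_apply_def a b x

lemma swapj_mem_Icc {n j : ℕ} (hj : 1 ≤ j) (hjn : j < n) (x : ℤ) :
    x ∈ Finset.Icc (1:ℤ) (n:ℤ) ↔ Equiv.swap (j:ℤ) ((j:ℤ)+1) x ∈ Finset.Icc (1:ℤ) (n:ℤ) := by
  have hj' : (1:ℤ) ≤ j := by exact_mod_cast hj
  have hjn' : (j:ℤ)+1 ≤ n := by exact_mod_cast hjn
  rw [swapj_def, Finset.mem_Icc, Finset.mem_Icc]
  split_ifs <;> omega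

lemma swapj_lt_iff (j : ℕ) (x y : ℤ) (h1 : ¬(x = (j:ℤ) ∧ y = (j:ℤ)+1))
    (h2 : ¬(x = (j:ℤ)+1 ∧ y = (j:ℤ))) :
    Equiv.swap (j:ℤ) ((j:ℤ)+1) x < Equiv.swap (j:ℤ) ((j:ℤ)+1) y ↔ x < y := by
  rw [swapj_def, swapj_def]
  split_ifs <;> omega

set_option maxHeartbeats 1000000 in
lemma Lstat_sgen_ascent (n j : ℕ) (hj : 1 ≤ j) (hjn : j < n) (w : Equiv.Perm ℤ)
    (h : w (j:ℤ) < w ((j:ℤ)+1)) : Lstat n (w * sgen j) = Lstat n w + 1 := by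
  have hjn' : (j:ℤ)+1 ≤ n := by exact_mod_cast hjn
  have hj' : (1:ℤ) ≤ j := by exact_mod_cast hj
  have happ : ∀ x : ℤ, 1 ≤ x → (w * sgen j) x = w (Equiv.swap (j:ℤ) ((j:ℤ)+1) x) := by
    intro x hx
    simp only [Equiv.Perm.mul_apply]
    rw [sgen_eq_swap j hj hx]
  have hneg : (∑ i ∈ Finset.Icc (1:ℤ) (n:ℤ), if (w * sgen j) i < 0 then (1:ℕ) else 0)
      = ∑ i ∈ Finset.Icc (1:ℤ) (n:ℤ), if w i < 0 then (1:ℕ) else 0 :=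
    calc (∑ i ∈ Finset.Icc (1:ℤ) (n:ℤ), if (w * sgen j) i < 0 then (1:ℕ) else 0)
        = ∑ i ∈ Finset.Icc (1:ℤ) (n:ℤ),
            if w (Equiv.swap (j:ℤ) ((j:ℤ)+1) i) < 0 then (1:ℕ) else 0 :=
          Finset.sum_congr rfl (fun i hi => by rw [happ i (Finset.mem_Icc.mp hi).1])
      _ = _ := Finset.sum_equiv (Equiv.swap (j:ℤ) ((j:ℤ)+1))
            (fun x => swapj_mem_Icc hj hjn x) (fun i _ => rfl)
  have hpmem : ∀ p : ℤ × ℤ, p ∈ Pn n ↔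
      (Equiv.swap (j:ℤ) ((j:ℤ)+1) p.1, Equiv.swap (j:ℤ) ((j:ℤ)+1) p.2) ∈ Pn n := by
    intro p
    simp only [Pn, Finset.mem_product]
    exact and_congr (swapj_mem_Icc hj hjn p.1) (swapj_mem_Icc hj hjn p.2)
  have hA : (∑ p ∈ Pn n, Gstat w p) = ∑ p ∈ Pn n,
      Gstat w (Equiv.swap (j:ℤ) ((j:ℤ)+1) p.1, Equiv.swap (j:ℤ) ((j:ℤ)+1) p.2) := by
    apply Finset.sum_equiv ((Equiv.swap (j:ℤ) ((j:ℤ)+1)).prodCongr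
      (Equiv.swap (j:ℤ) ((j:ℤ)+1))) (fun p => hpmem p)
    intro p _
    simp only [Equiv.prodCongr_apply, Prod.map, Gstat, Equiv.swap_apply_self]
  have hane : ((j:ℤ), (j:ℤ)+1) ≠ ((j:ℤ)+1, (j:ℤ)) := by
    simp only [ne_eq, Prod.mk.injEq]
    omega
  have hsub : ({((j:ℤ), (j:ℤ)+1), ((j:ℤ)+1, (j:ℤ))} : Finset (ℤ × ℤ)) ⊆ Pn n := by
    intro p hp
    simp only [Finset.mem_insert, Finset.mem_singleton] at hp
    rcases hp with hp | hp <;> subst hp <;>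
      simp only [Pn, Finset.mem_product, Finset.mem_Icc] <;> omega
  have hB : ∀ p ∈ Pn n \ ({((j:ℤ), (j:ℤ)+1), ((j:ℤ)+1, (j:ℤ))} : Finset (ℤ × ℤ)),
      Gstat (w * sgen j) p =
      Gstat w (Equiv.swap (j:ℤ) ((j:ℤ)+1) p.1, Equiv.swap (j:ℤ) ((j:ℤ)+1) p.2) := by
    intro p hp
    obtain ⟨hpP, hps⟩ := Finset.mem_sdiff.mp hp
    obtain ⟨h1, h2⟩ := Finset.mem_product.mp hpP
    have hx1 : 1 ≤ p.1 := (Finset.mem_Icc.mp h1).1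
    have hx2 : 1 ≤ p.2 := (Finset.mem_Icc.mp h2).1
    simp only [Finset.mem_insert, Finset.mem_singleton, Prod.ext_iff, not_or] at hps
    have hlt := swapj_lt_iff j p.1 p.2 (by exact_mod_cast hps.1) (by exact_mod_cast hps.2)
    simp only [Gstat, happ p.1 hx1, happ p.2 hx2, hlt]
  have v1 : (w * sgen j) (j:ℤ) = w ((j:ℤ)+1) := by
    rw [happ _ hj', Equiv.swap_apply_left]
  have v2 : (w * sgen j) ((j:ℤ)+1) = w (j:ℤ) := by
    rw [happ _ (by omega), Equiv.swap_apply_right]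
  have sσ1 : Equiv.swap (j:ℤ) ((j:ℤ)+1) (j:ℤ) = (j:ℤ)+1 := Equiv.swap_apply_left _ _
  have sσ2 : Equiv.swap (j:ℤ) ((j:ℤ)+1) ((j:ℤ)+1) = (j:ℤ) := Equiv.swap_apply_right _ _
  have key : (∑ p ∈ Pn n, Gstat (w * sgen j) p) = (∑ p ∈ Pn n, Gstat w p) + 1 := by
    rw [hA, ← Finset.sum_sdiff hsub (f := Gstat (w * sgen j)),
      ← Finset.sum_sdiff hsub (f := fun p =>
        Gstat w (Equiv.swap (j:ℤ) ((j:ℤ)+1) p.1, Equiv.swap (j:ℤ) ((j:ℤ)+1) p.2)),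
      Finset.sum_congr rfl hB, Finset.sum_pair hane, Finset.sum_pair hane]
    simp only [Gstat, v1, v2, sσ1, sσ2]
    split_ifs <;> omega
  simp only [Lstat, key, hneg]
  omega

lemma sgen_self (j : ℕ) (hj : 1 ≤ j) : sgen j (j:ℤ) = (j:ℤ)+1 := by
  have hj' : (1:ℤ) ≤ j := by exact_mod_cast hj
  rw [sgen_apply j hj]; split_ifs <;> omega

lemma sgen_succ_self (j : ℕ) (hj : 1 ≤ j) : sgen j ((j:ℤ)+1) = (j:ℤ) := by
  have hj' : (1:ℤ) ≤ j := by exact_mod_cast hj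
  rw [sgen_apply j hj]; split_ifs <;> omega

lemma mul_sgen_self (j : ℕ) (hj : 1 ≤ j) (w : Equiv.Perm ℤ) :
    (w * sgen j) (j:ℤ) = w ((j:ℤ)+1) := by
  simp only [Equiv.Perm.mul_apply, sgen_self j hj]

lemma mul_sgen_succ (j : ℕ) (hj : 1 ≤ j) (w : Equiv.Perm ℤ) :
    (w * sgen j) ((j:ℤ)+1) = w (j:ℤ) := by
  simp only [Equiv.Perm.mul_apply, sgen_succ_self j hj]

lemma mul_sgen_cancel (j : ℕ) (hj : 1 ≤ j) (w : Equiv.Perm ℤ) :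
    (w * sgen j) * sgen j = w := by
  rw [mul_assoc, sgen_sq j hj, mul_one]

lemma mul_tgen_cancel (i : ℕ) (w : Equiv.Perm ℤ) : (w * tgen i) * tgen i = w := by
  rw [mul_assoc, tgen_sq i, mul_one]

lemma Lstat_sgen_descent (n j : ℕ) (hj : 1 ≤ j) (hjn : j < n) (w : Equiv.Perm ℤ)
    (h : w ((j:ℤ)+1) < w (j:ℤ)) : Lstat n w = Lstat n (w * sgen j) + 1 := by
  have := Lstat_sgen_ascent n j hj hjn (w * sgen j)
    (by rw [mul_sgen_self j hj, mul_sgen_succ j hj]; exact h)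
  rwa [mul_sgen_cancel j hj] at this

lemma mul_tgen_self (n i : ℕ) (w : Equiv.Perm ℤ) (hw : w ∈ Wgrp n) :
    (w * tgen i) (i:ℤ) = -(w (i:ℤ)) := by
  simp only [Equiv.Perm.mul_apply, tgen, Equiv.swap_apply_left]
  exact hw.1 (i:ℤ)

lemma mul_tgen_other (i : ℕ) (w : Equiv.Perm ℤ) {x : ℤ} (h1 : x ≠ (i:ℤ)) (h2 : x ≠ -(i:ℤ)) :
    (w * tgen i) x = w x := by
  simp only [Equiv.Perm.mul_apply]
  rw [tgen_apply, if_neg h1, if_neg h2]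

set_option maxHeartbeats 800000 in
lemma Lstat_tgen_one (n : ℕ) (hn : 1 ≤ n) (w : Equiv.Perm ℤ) (hw : w ∈ Wgrp n)
    (h : 0 < w 1) : Lstat n (w * tgen 1) = Lstat n w + 1 := by
  have hc : ((1:ℕ):ℤ) = 1 := by norm_num
  have hv1 : (w * tgen 1) 1 = -(w 1) := by
    have := mul_tgen_self n 1 w hw
    rwa [hc] at this
  have hv : ∀ x : ℤ, 1 ≤ x → (w * tgen 1) x = if x = 1 then -(w 1) else w x := by
    intro x hx
    split_ifs with he
    · rw [he]; exact hv1
    · exact mul_tgen_other 1 w (by omega) (by omega)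
  have hpair : (∑ p ∈ Pn n, Gstat (w * tgen 1) p) = ∑ p ∈ Pn n, Gstat w p := by
    apply Finset.sum_congr rfl
    intro p hp
    obtain ⟨x, y⟩ := p
    obtain ⟨h1, h2⟩ := Finset.mem_product.mp hp
    rw [Finset.mem_Icc] at h1 h2
    simp only at h1 h2
    unfold Gstat
    simp only
    rw [hv x h1.1, hv y h2.1]
    rcases eq_or_ne x 1 with rfl | hx1 <;> rcases eq_or_ne y 1 with rfl | hy1 <;>
      split_ifs <;> omega
  have hIcc : Finset.Icc (1:ℤ) (n:ℤ) = insert 1 (Finset.Icc 2 (n:ℤ)) := by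
    have hn' : (1:ℤ) ≤ n := by exact_mod_cast hn
    ext x
    simp only [Finset.mem_Icc, Finset.mem_insert]
    omega
  have h1n : (1:ℤ) ∉ Finset.Icc (2:ℤ) (n:ℤ) := by
    simp only [Finset.mem_Icc]
    omega
  have hneg : (∑ i ∈ Finset.Icc (1:ℤ) (n:ℤ), if (w * tgen 1) i < 0 then (1:ℕ) else 0)
      = (∑ i ∈ Finset.Icc (1:ℤ) (n:ℤ), if w i < 0 then (1:ℕ) else 0) + 1 := by
    rw [hIcc, Finset.sum_insert h1n, Finset.sum_insert h1n, hv1,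
      Finset.sum_congr rfl (fun i hi => by
        rw [mul_tgen_other 1 w (by have := (Finset.mem_Icc.mp hi).1; omega)
          (by have := (Finset.mem_Icc.mp hi).1; omega)])]
    split_ifs <;> omega
  simp only [Lstat, hpair, hneg]
  omega

lemma Lstat_tgen_one_descent (n : ℕ) (hn : 1 ≤ n) (w : Equiv.Perm ℤ) (hw : w ∈ Wgrp n)
    (h : w 1 < 0) : Lstat n w = Lstat n (w * tgen 1) + 1 := by
  have hmem : w * tgen 1 ∈ Wgrp n := mul_mem_Wgrp hw (tgen_mem_Wgrp le_rfl hn)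
  have hc : ((1:ℕ):ℤ) = 1 := by norm_num
  have hv1 : (w * tgen 1) 1 = -(w 1) := by
    have := mul_tgen_self n 1 w hw
    rwa [hc] at this
  have := Lstat_tgen_one n hn (w * tgen 1) hmem (by rw [hv1]; omega)
  rwa [mul_tgen_cancel 1 w] at this

lemma Lstat_lt_tgen (n : ℕ) : ∀ i, 1 ≤ i → i ≤ n → ∀ w : Equiv.Perm ℤ, w ∈ Wgrp n →
    0 < w (i:ℤ) → Lstat n w < Lstat n (w * tgen i) := by
  intro i
  induction i with
  | zero => omega
  | succ i ih =>
    intro _ hin w hw hpos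
    rcases Nat.eq_zero_or_pos i with rfl | hi
    · -- base case i+1 = 1
      have h1 : 0 < w 1 := by exact_mod_cast hpos
      have := Lstat_tgen_one n (by omega) w hw h1
      have hc : ((0:ℕ)+1 : ℕ) = 1 := rfl
      rw [hc] at *
      omega
    · -- inductive step
      have hin' : i < n := by omega
      have hii : 1 ≤ i := hi
      set u := w * sgen i with hu
      have hu_mem : u ∈ Wgrp n := mul_mem_Wgrp hw (sgen_mem_Wgrp hii (by omega))
      have hcast : ((i+1 : ℕ) : ℤ) = (i:ℤ) + 1 := by push_cast; ring
      have hui : u (i:ℤ) = w ((i:ℤ)+1) := mul_sgen_self i hii w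
      have hui1 : u ((i:ℤ)+1) = w (i:ℤ) := mul_sgen_succ i hii w
      have hpos' : 0 < u (i:ℤ) := by rw [hui, ← hcast]; exact hpos
      have hIH := ih hii (by omega) u hu_mem hpos'
      set x := u * tgen i with hx
      have hx_mem : x ∈ Wgrp n := mul_mem_Wgrp hu_mem (tgen_mem_Wgrp hii (by omega))
      have hxi : x (i:ℤ) = -(u (i:ℤ)) := mul_tgen_self n i u hu_mem
      have hxi1 : x ((i:ℤ)+1) = u ((i:ℤ)+1) := by
        have hi' : (1:ℤ) ≤ i := by exact_mod_cast hii
        exact mul_tgen_other i u (by omega) (by omega)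
      have hgoal_eq : w * tgen (i+1) = x * sgen i := by
        rw [tgen_succ i hii, hx, hu]
        group
      rw [hgoal_eq]
      -- a = w(i+1) = u i > 0, b = w i = u (i+1) = x (i+1), x i = -a
      have hne : u ((i:ℤ)+1) ≠ -(u (i:ℤ)) := by
        apply Wgrp_ne_neg hu_mem
        have hi' : (1:ℤ) ≤ i := by exact_mod_cast hii
        omega
      rcases lt_or_gt_of_ne hne with hlt | hgt
      · -- b < -a hence b < a: ascent for w at i, descent for x at i
        have hba : w (i:ℤ) < w ((i:ℤ)+1) := by
          rw [← hui1, ← hui]; omega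
        have h1 : Lstat n u = Lstat n w + 1 := Lstat_sgen_ascent n i hii hin' w hba
        have h2 : Lstat n x = Lstat n (x * sgen i) + 1 := by
          apply Lstat_sgen_descent n i hii hin' x
          rw [hxi, hxi1]; omega
        omega
      · -- b > -a : ascent for x at i
        have h2 : Lstat n (x * sgen i) = Lstat n x + 1 := by
          apply Lstat_sgen_ascent n i hii hin' x
          rw [hxi, hxi1]; omega
        have hneq : u (i:ℤ) ≠ u ((i:ℤ)+1) := by
          intro hcon
          have := u.injective hcon
          omega
        rcases lt_or_gt_of_ne hneq with hlt2 | hgt2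
        · -- u i < u (i+1), i.e. w (i+1) < w i : descent for w at i
          have h1 : Lstat n w = Lstat n u + 1 := by
            apply Lstat_sgen_descent n i hii hin' w
            rw [← hui1, ← hui]; omega
          omega
        · -- w i < w (i+1): ascent for w
          have h1 : Lstat n u = Lstat n w + 1 := by
            apply Lstat_sgen_ascent n i hii hin' w
            rw [← hui1, ← hui]; omega
          omega

lemma Lstat_one (n : ℕ) : Lstat n 1 = 0 := by
  have h1 : ∀ p ∈ Pn n, Gstat 1 p = 0 := by
    intro p hp
    obtain ⟨h1, h2⟩ := Finset.mem_product.mp hp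
    rw [Finset.mem_Icc] at h1 h2
    unfold Gstat
    rw [if_neg (by simp only [Equiv.Perm.one_apply]; omega),
      if_neg (by simp only [Equiv.Perm.one_apply]; omega)]
  have h2 : ∀ i ∈ Finset.Icc (1:ℤ) (n:ℤ), (if (1 : Equiv.Perm ℤ) i < 0 then (1:ℕ) else 0) = 0 := by
    intro i hi
    rw [Finset.mem_Icc] at hi
    rw [if_neg (by simp only [Equiv.Perm.one_apply]; omega)]
  unfold Lstat
  rw [Finset.sum_eq_zero h1, Finset.sum_eq_zero h2]
  rfl

lemma Wgrp_eq_one {n : ℕ} {w : Equiv.Perm ℤ} (hw : w ∈ Wgrp n)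
    (hmono : ∀ a b : ℤ, 1 ≤ a → a < b → b ≤ n → w a < w b)
    (hpos : ∀ a : ℤ, 1 ≤ a → a ≤ n → 0 < w a) : w = 1 := by
  have hbound : ∀ a : ℤ, 1 ≤ a → a ≤ n → w a ≤ n := by
    intro a h1 h2
    by_contra hcon
    push_neg at hcon
    have hfix : w (w a) = w a := hw.2 (w a) (by rw [abs_of_pos (hpos a h1 h2)]; omega)
    have := w.injective hfix
    omega
  have hid : ∀ a : ℤ, 1 ≤ a → a ≤ n → w a = a := by
    intro a h1 h2
    have hle1 : a ≤ w a := by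
      have hcard := Finset.card_le_card_of_injOn (s := Finset.Icc 1 a)
        (t := Finset.Icc 1 (w a)) (⇑w) ?_ ?_
      · rw [Int.card_Icc, Int.card_Icc] at hcard
        have := hpos a h1 h2
        omega
      · intro x hx
        rw [Finset.mem_coe, Finset.mem_Icc] at hx ⊢
        refine ⟨by have := hpos x hx.1 (by omega); omega, ?_⟩
        rcases eq_or_lt_of_le hx.2 with rfl | hlt
        · exact le_rfl
        · exact le_of_lt (hmono x a hx.1 hlt h2)
      · exact fun x _ y _ hxy => w.injective hxy
    have hle2 : w a ≤ a := by
      have hcard := Finset.card_le_card_of_injOn (s := Finset.Icc a (n:ℤ))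
        (t := Finset.Icc (w a) (n:ℤ)) (⇑w) ?_ ?_
      · rw [Int.card_Icc, Int.card_Icc] at hcard
        have h3 := hpos a h1 h2
        have h4 := hbound a h1 h2
        omega
      · intro x hx
        rw [Finset.mem_coe, Finset.mem_Icc] at hx ⊢
        refine ⟨?_, hbound x (by omega) hx.2⟩
        rcases eq_or_lt_of_le hx.1 with rfl | hlt
        · exact le_rfl
        · exact le_of_lt (hmono a x h1 hlt hx.2)
      · exact fun x _ y _ hxy => w.injective hxy
    omega
  apply Equiv.ext
  intro x
  simp only [Equiv.Perm.one_apply]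
  rcases lt_trichotomy x 0 with hneg | rfl | hposx
  · by_cases hxn : (n:ℤ) < |x|
    · exact hw.2 x hxn
    · push_neg at hxn
      have habs : -x ≤ n := by rcases abs_cases x with ⟨h1, h2⟩ | ⟨h1, h2⟩ <;> omega
      have h5 := hw.1 (-x)
      rw [neg_neg] at h5
      rw [h5, hid (-x) (by omega) habs]
      omega
  · exact Wgrp_zero hw
  · by_cases hxn : (n:ℤ) < |x|
    · exact hw.2 x hxn
    · push_neg at hxn
      have habs : x ≤ n := by rcases abs_cases x with ⟨h1, h2⟩ | ⟨h1, h2⟩ <;> omega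
      exact hid x (by omega) habs

lemma Wgrp_descent_or_id {n : ℕ} (hn : 1 ≤ n) {w : Equiv.Perm ℤ} (hw : w ∈ Wgrp n) :
    w = 1 ∨ w 1 < 0 ∨ ∃ j : ℕ, 1 ≤ j ∧ j < n ∧ w ((j:ℤ)+1) < w (j:ℤ) := by
  by_contra hcon
  push_neg at hcon
  obtain ⟨hne, hpos1, hnodesc⟩ := hcon
  have hw1 : 0 < w 1 := by
    have := Wgrp_ne_zero hw (i := 1) (by omega)
    omega
  have hstep : ∀ a : ℤ, 1 ≤ a → a < n → w a < w (a+1) := by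
    intro a h1 h2
    have ha : ((a.toNat : ℤ)) = a := Int.toNat_of_nonneg (by omega)
    have h3 := hnodesc a.toNat (by omega) (by omega)
    rw [ha] at h3
    have hne2 : w a ≠ w (a+1) := fun hcon2 => by have := w.injective hcon2; omega
    omega
  have hmono : ∀ a b : ℤ, 1 ≤ a → a < b → b ≤ n → w a < w b := by
    intro a b h1 h2 h3
    have key : ∀ b : ℤ, a + 1 ≤ b → b ≤ n → w a < w b := by
      refine Int.le_induction (fun _ => hstep a h1 (by omega)) ?_
      intro b hb ihb hbn
      exact lt_trans (ihb (by omega)) (hstep b (by omega) (by omega))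
    exact key b (by omega) h3
  have hpos : ∀ a : ℤ, 1 ≤ a → a ≤ n → 0 < w a := by
    intro a h1 h2
    rcases eq_or_lt_of_le h1 with rfl | hlt
    · exact hw1
    · exact lt_trans hw1 (hmono 1 a le_rfl hlt h2)
  exact hne (Wgrp_eq_one hw hmono hpos)


lemma exists_word (n : ℕ) (hn : 1 ≤ n) :
    ∀ m : ℕ, ∀ w : Equiv.Perm ℤ, w ∈ Wgrp n → Lstat n w ≤ m →
    ∃ l : List (Equiv.Perm ℤ), l.length = Lstat n w ∧
      (∀ g ∈ l, (∃ j : ℕ, 1 ≤ j ∧ j < n ∧ g = sgen j) ∨ g = tgen 1) ∧ l.prod = w := by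
  intro m
  induction m with
  | zero =>
    intro w hw hle
    rcases Wgrp_descent_or_id hn hw with rfl | hdesc | ⟨j, hj1, hj2, hdesc⟩
    · exact ⟨[], by simp [Lstat_one], by simp, rfl⟩
    · exfalso
      have := Lstat_tgen_one_descent n hn w hw hdesc
      omega
    · exfalso
      have := Lstat_sgen_descent n j hj1 hj2 w hdesc
      omega
  | succ m ih =>
    intro w hw hle
    rcases Wgrp_descent_or_id hn hw with rfl | hdesc | ⟨j, hj1, hj2, hdesc⟩
    · exact ⟨[], by simp [Lstat_one], by simp, rfl⟩
    · have heq := Lstat_tgen_one_descent n hn w hw hdesc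
      have hmem : w * tgen 1 ∈ Wgrp n := mul_mem_Wgrp hw (tgen_mem_Wgrp le_rfl hn)
      obtain ⟨l, hlen, hgen, hprod⟩ := ih (w * tgen 1) hmem (by omega)
      refine ⟨l ++ [tgen 1], ?_, ?_, ?_⟩
      · rw [List.length_append, hlen]
        simp only [List.length_singleton]
        omega
      · intro g hg
        rcases List.mem_append.mp hg with h | h
        · exact hgen g h
        · right
          simpa using h
      · rw [List.prod_append, List.prod_singleton, hprod, mul_tgen_cancel]
    · have heq := Lstat_sgen_descent n j hj1 hj2 w hdesc
      have hmem : w * sgen j ∈ Wgrp n := mul_mem_Wgrp hw (sgen_mem_Wgrp hj1 (by omega))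
      obtain ⟨l, hlen, hgen, hprod⟩ := ih (w * sgen j) hmem (by omega)
      refine ⟨l ++ [sgen j], ?_, ?_, ?_⟩
      · rw [List.length_append, hlen]
        simp only [List.length_singleton]
        omega
      · intro g hg
        rcases List.mem_append.mp hg with h | h
        · exact hgen g h
        · left
          exact ⟨j, hj1, hj2, by simpa using h⟩
      · rw [List.prod_append, List.prod_singleton, hprod, mul_sgen_cancel j hj1]

lemma word_bound (n : ℕ) (hn : 1 ≤ n) :
    ∀ l : List (Equiv.Perm ℤ),
    (∀ g ∈ l, (∃ j : ℕ, 1 ≤ j ∧ j < n ∧ g = sgen j) ∨ g = tgen 1) →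
    l.prod ∈ Wgrp n ∧ Lstat n l.prod ≤ l.length := by
  intro l
  induction l using List.reverseRecOn with
  | nil =>
    intro _
    refine ⟨one_mem_Wgrp n, ?_⟩
    simp [Lstat_one]
  | append_singleton l g ih =>
    intro hgen
    obtain ⟨hmem, hlen⟩ := ih (fun g' h => hgen g' (List.mem_append.mpr (Or.inl h)))
    have hg := hgen g (by simp)
    rw [List.prod_append, List.prod_singleton, List.length_append, List.length_singleton]
    set u := l.prod with hu
    rcases hg with ⟨j, hj1, hj2, rfl⟩ | rfl
    · refine ⟨mul_mem_Wgrp hmem (sgen_mem_Wgrp hj1 (by omega)), ?_⟩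
      have hne : u (j:ℤ) ≠ u ((j:ℤ)+1) := by
        intro hcon
        have := u.injective hcon
        omega
      rcases lt_or_gt_of_ne hne with hlt | hgt
      · have := Lstat_sgen_ascent n j hj1 hj2 u hlt
        omega
      · have := Lstat_sgen_descent n j hj1 hj2 u hgt
        omega
    · refine ⟨mul_mem_Wgrp hmem (tgen_mem_Wgrp le_rfl hn), ?_⟩
      have hne : u 1 ≠ 0 := Wgrp_ne_zero hmem (by omega)
      rcases lt_or_gt_of_ne hne with hlt | hgt
      · have := Lstat_tgen_one_descent n hn u hmem hlt
        omega
      · have := Lstat_tgen_one n hn u hmem hgt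
        omega

lemma lenB_eq_Lstat (n : ℕ) (hn : 1 ≤ n) (w : Equiv.Perm ℤ) (hw : w ∈ Wgrp n) :
    lenB n w = Lstat n w := by
  obtain ⟨l, hlen, hgen, hprod⟩ := exists_word n hn (Lstat n w) w hw le_rfl
  have hmem : Lstat n w ∈ {k | ∃ l : List (Equiv.Perm ℤ), l.length = k ∧
      (∀ g ∈ l, (∃ j : ℕ, 1 ≤ j ∧ j < n ∧ g = sgen j) ∨ g = tgen 1) ∧ l.prod = w} :=
    ⟨l, hlen, hgen, hprod⟩
  have hub : lenB n w ≤ Lstat n w := Nat.sInf_le hmem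
  obtain ⟨l', hlen', hgen', hprod'⟩ := Nat.sInf_mem (Set.nonempty_of_mem hmem)
  have hlb := (word_bound n hn l' hgen').2
  rw [hprod'] at hlb
  unfold lenB at hub ⊢
  omega



lemma InTauS_iff (n j : ℕ) (hj : 1 ≤ j) (hjn : j < n) (w : Equiv.Perm ℤ) (hw : w ∈ Wgrp n) :
    InTauS n j w ↔ w ((j:ℤ)+1) < w (j:ℤ) := by
  have hn : 1 ≤ n := by omega
  have hmem : w * sgen j ∈ Wgrp n := mul_mem_Wgrp hw (sgen_mem_Wgrp hj (by omega))
  unfold InTauS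
  rw [lenB_eq_Lstat n hn _ hmem, lenB_eq_Lstat n hn _ hw]
  have hne : w (j:ℤ) ≠ w ((j:ℤ)+1) := by
    intro hcon
    have := w.injective hcon
    omega
  constructor
  · intro h
    by_contra hcon
    push_neg at hcon
    have hlt : w (j:ℤ) < w ((j:ℤ)+1) := lt_of_le_of_ne hcon hne
    have := Lstat_sgen_ascent n j hj hjn w hlt
    omega
  · intro h
    have := Lstat_sgen_descent n j hj hjn w h
    omega

lemma InTauT_iff (n i : ℕ) (hi : 1 ≤ i) (hin : i ≤ n) (w : Equiv.Perm ℤ) (hw : w ∈ Wgrp n) :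
    InTauT n i w ↔ w (i:ℤ) < 0 := by
  have hn : 1 ≤ n := by omega
  have hmem : w * tgen i ∈ Wgrp n := mul_mem_Wgrp hw (tgen_mem_Wgrp hi hin)
  unfold InTauT
  rw [lenB_eq_Lstat n hn _ hmem, lenB_eq_Lstat n hn _ hw]
  have hi' : (1:ℤ) ≤ i := by exact_mod_cast hi
  have hne : w (i:ℤ) ≠ 0 := Wgrp_ne_zero hw (by omega)
  constructor
  · intro h
    by_contra hcon
    push_neg at hcon
    have hpos : 0 < w (i:ℤ) := lt_of_le_of_ne hcon (Ne.symm hne)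
    have := Lstat_lt_tgen n i hi hin w hw hpos
    omega
  · intro h
    have hv : 0 < (w * tgen i) (i:ℤ) := by
      rw [mul_tgen_self n i w hw]
      omega
    have := Lstat_lt_tgen n i hi hin (w * tgen i) hmem hv
    rw [mul_tgen_cancel] at this
    omega

/-- `w` lies in the domain `D^k_{SC}(W_n)` of `T^k_{SC}` — i.e. for every
`1 ≤ i ≤ k` there is a choice `{δ_i, β_i} = {α_{i+1}, α'_i}` with
`w ∈ D^k_{δ_i β_i}` and `w t_i ∈ D^k_{β_i δ_i}` — if and only if
`|w(1)| > |w(2)| > ⋯ > |w(k+1)|`. -/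
theorem mem_D_SC_iff (n k : ℕ) (hk1 : 1 ≤ k) (hk2 : k < n)
    (w : Equiv.Perm ℤ) (hw : w ∈ Wgrp n) :
    (∀ i : ℕ, 1 ≤ i → i ≤ k →
      ((¬ InTauS n i w ∧ InTauT n i w ∧
          ¬ InTauT n i (w * tgen i) ∧ InTauS n i (w * tgen i)) ∨
       (InTauS n i w ∧ ¬ InTauT n i w ∧
          ¬ InTauS n i (w * tgen i) ∧ InTauT n i (w * tgen i)))) ↔
      (∀ i : ℕ, 1 ≤ i → i ≤ k → |w ((i : ℤ) + 1)| < |w (i : ℤ)|) := by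
  have key : ∀ i : ℕ, 1 ≤ i → i ≤ k →
      (((¬ InTauS n i w ∧ InTauT n i w ∧
          ¬ InTauT n i (w * tgen i) ∧ InTauS n i (w * tgen i)) ∨
       (InTauS n i w ∧ ¬ InTauT n i w ∧
          ¬ InTauS n i (w * tgen i) ∧ InTauT n i (w * tgen i))) ↔
        |w ((i : ℤ) + 1)| < |w (i : ℤ)|) := by
    intro i hi1 hik
    have hiN : i < n := by omega
    have hi1n : i ≤ n := by omega
    have hi' : (1:ℤ) ≤ i := by exact_mod_cast hi1
    have htmem : w * tgen i ∈ Wgrp n := mul_mem_Wgrp hw (tgen_mem_Wgrp hi1 hi1n)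
    have vt : (w * tgen i) (i:ℤ) = -(w (i:ℤ)) := mul_tgen_self n i w hw
    have vt1 : (w * tgen i) ((i:ℤ)+1) = w ((i:ℤ)+1) :=
      mul_tgen_other i w (by omega) (by omega)
    have s1 := InTauS_iff n i hi1 hiN w hw
    have t1 := InTauT_iff n i hi1 hi1n w hw
    have s2 := InTauS_iff n i hi1 hiN (w * tgen i) htmem
    have t2 := InTauT_iff n i hi1 hi1n (w * tgen i) htmem
    rw [vt, vt1] at s2
    rw [vt] at t2
    have hwt : (w * tgen i) * tgen i = w := mul_tgen_cancel i w
    rw [s1, t1, s2, t2]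
    have hab : w ((i:ℤ)+1) ≠ w (i:ℤ) := fun hcon => by
      have := w.injective hcon
      omega
    have hanb : w ((i:ℤ)+1) ≠ -(w (i:ℤ)) := Wgrp_ne_neg hw (by omega)
    have ha0 : w (i:ℤ) ≠ 0 := Wgrp_ne_zero hw (by omega)
    rcases abs_cases (w ((i:ℤ)+1)) with ⟨h1, h2⟩ | ⟨h1, h2⟩ <;>
      rcases abs_cases (w (i:ℤ)) with ⟨h3, h4⟩ | ⟨h3, h4⟩ <;>
      rw [h1, h3] <;> omega
  constructor
  · intro H i h1 h2
    exact (key i h1 h2).mp (H i h1 h2)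
  · intro H i h1 h2
    exact (key i h1 h2).mpr (H i h1 h2)
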